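/- Let (X, μ) be a standard non-atomic probability space. In the space 𝒯 of (Koopman operators of) all measure-preserving transformations of (X, μ), equipped with the strong operator topology, the subset 𝒯_inv of invertible measure-preserving transformations is dense. -/

import Mathlib

open MeasureTheory Filter Topology

variable (X : Type*) [MeasurableSpace X] (μ : Measure X)

/-- The set of Koopman operators of measure-preserving transformations of `(X, μ)`, as
self-maps of `L²(X, μ)`.  The ambient function space `L² → L²` carries the product topology,
whose subspace topology on this set is the strong operator topology. -/
def Koop : Set (Lp ℝ 2 μ → Lp ℝ 2 μ) :=
  {g | ∃ T : X → X, MeasurePreserving T μ μ ∧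
    ∀ f : Lp ℝ 2 μ, (g f : X → ℝ) =ᵐ[μ] (f : X → ℝ) ∘ T}

/-- The set of Koopman operators of invertible (i.e. admitting a measure-preserving a.e.
inverse) measure-preserving transformations of `(X, μ)`. -/
def KoopInv : Set (Lp ℝ 2 μ → Lp ℝ 2 μ) :=
  {g | ∃ T S : X → X, MeasurePreserving T μ μ ∧ MeasurePreserving S μ μ ∧
    (∀ᵐ x ∂μ, S (T x) = x) ∧ (∀ᵐ x ∂μ, T (S x) = x) ∧
    ∀ f : Lp ℝ 2 μ, (g f : X → ℝ) =ᵐ[μ] (f : X → ℝ) ∘ T}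

section AuxiliaryInvDense

open Set Function
open scoped ENNReal

namespace InvDense

lemma cdf_level (ν : Measure ℝ) [IsFiniteMeasure ν] [NullSingletonClass ν] {t : ℝ} (ht0 : 0 ≤ t)
    (htm : ENNReal.ofReal t < ν univ) :
    ν {x | (ν (Iic x)).toReal ≤ t} = ENNReal.ofReal t := by
  have hfin : ∀ x : ℝ, ν (Iic x) ≠ ∞ := fun x => measure_ne_top ν _
  have hiff : ∀ x : ℝ, (ν (Iic x)).toReal ≤ t ↔ ν (Iic x) ≤ ENNReal.ofReal t := by
    intro x
    rw [← ENNReal.le_ofReal_iff_toReal_le (hfin x) ht0]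
  set S : Set ℝ := {x | (ν (Iic x)).toReal ≤ t} with hS
  rcases eq_empty_or_nonempty S with hSe | hSne
  · -- then t must be 0
    rcases eq_or_lt_of_le ht0 with h0 | h0
    · rw [hSe, ← h0]; simp
    · exfalso
      have h1 : ν (⋂ n : ℕ, Iic (-(n:ℝ))) = ⨅ n : ℕ, ν (Iic (-(n:ℝ))) := by
        refine Antitone.measure_iInter (fun a b hab => ?_) (fun n => measurableSet_Iic.nullMeasurableSet) ⟨0, hfin _⟩
        exact Iic_subset_Iic.2 (by exact_mod_cast neg_le_neg (by exact_mod_cast hab))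
      have h2 : (⋂ n : ℕ, Iic (-(n:ℝ))) = ∅ := by
        ext x; simp only [mem_iInter, mem_Iic, mem_empty_iff_false, iff_false, not_forall, not_le]
        rcases exists_nat_gt (-x) with ⟨n, hn⟩
        exact ⟨n, by linarith⟩
      rw [h2, measure_empty] at h1
      have h3 : ∃ n : ℕ, ν (Iic (-(n:ℝ))) < ENNReal.ofReal t := by
        by_contra hc
        push_neg at hc
        have := le_iInf hc
        rw [← h1] at this
        exact absurd this (by simpa using (ENNReal.ofReal_pos.2 h0).ne')
      rcases h3 with ⟨n, hn⟩
      have : (-(n:ℝ)) ∈ S := (hiff _).2 hn.le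
      rw [hSe] at this; exact this
  · -- S nonempty
    have hbdd : BddAbove S := by
      have h1 : ν (⋃ n : ℕ, Iic (n:ℝ)) = ⨆ n : ℕ, ν (Iic (n:ℝ)) := by
        refine Monotone.measure_iUnion (fun a b hab => Iic_subset_Iic.2 (by exact_mod_cast hab))
      have h2 : (⋃ n : ℕ, Iic (n:ℝ)) = univ := by
        ext x; simp only [mem_iUnion, mem_Iic, mem_univ, iff_true]
        rcases exists_nat_gt x with ⟨n, hn⟩; exact ⟨n, hn.le⟩
      rw [h2] at h1
      have h3 : ∃ n : ℕ, ENNReal.ofReal t < ν (Iic (n:ℝ)) := by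
        by_contra hc
        push_neg at hc
        rw [h1] at htm
        exact absurd (iSup_le hc) (not_le.2 htm)
      rcases h3 with ⟨n, hn⟩
      refine ⟨n, fun x hx => ?_⟩
      by_contra hxn
      push_neg at hxn
      have : ν (Iic (n:ℝ)) ≤ ν (Iic x) := measure_mono (Iic_subset_Iic.2 hxn.le)
      exact absurd ((hiff x).1 hx) (not_le.2 (lt_of_lt_of_le hn this))
    set c := sSup S with hc
    have hIio : Iio c ⊆ S := by
      intro y hy
      rcases exists_lt_of_lt_csSup hSne hy with ⟨x, hxS, hyx⟩
      exact (hiff y).2 (le_trans (measure_mono (Iic_subset_Iic.2 hyx.le)) ((hiff x).1 hxS))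
    have hcS : c ∈ S := by
      refine (hiff c).2 ?_
      have he : ν (Iic c) = ν (Iio c) := (measure_congr (Iio_ae_eq_Iic (a := c) (μ := ν))).symm
      rw [he]
      have hun : (⋃ n : ℕ, Iic (c - 1/(n+1))) = Iio c := by
        ext y
        simp only [mem_iUnion, mem_Iic, mem_Iio]
        constructor
        · rintro ⟨n, hn⟩
          have : (0:ℝ) < 1/(n+1) := by positivity
          linarith
        · intro hy
          rcases exists_nat_one_div_lt (show (0:ℝ) < c - y by linarith) with ⟨n, hn⟩
          exact ⟨n, by linarith⟩
      rw [← hun, Monotone.measure_iUnion (fun a b hab => Iic_subset_Iic.2 (by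
        have : (1:ℝ)/(b+1) ≤ 1/(a+1) := by
          apply one_div_le_one_div_of_le (by positivity) (by exact_mod_cast add_le_add_left (Nat.cast_le.2 hab) 1)
        linarith))]
      refine iSup_le fun n => ?_
      refine (hiff _).1 (hIio ?_)
      simp only [mem_Iio]
      have : (0:ℝ) < 1/(n+1) := by positivity
      linarith
    have hSc : S = Iic c := by
      ext x
      constructor
      · intro hx; exact le_csSup hbdd hx
      · intro hx
        exact (hiff x).2 (le_trans (measure_mono (Iic_subset_Iic.2 hx)) ((hiff c).1 hcS))
    have hge : ENNReal.ofReal t ≤ ν (Iic c) := by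
      have hin : (⋂ n : ℕ, Iic (c + 1/(n+1))) = Iic c := by
        ext y
        simp only [mem_iInter, mem_Iic]
        constructor
        · intro hy
          by_contra hyc
          push_neg at hyc
          rcases exists_nat_one_div_lt (show (0:ℝ) < y - c by linarith) with ⟨n, hn⟩
          have := hy n
          linarith
        · intro hy n
          have : (0:ℝ) < 1/(n+1) := by positivity
          linarith
      rw [← hin, Antitone.measure_iInter (fun a b hab => Iic_subset_Iic.2 (by
        have : (1:ℝ)/(b+1) ≤ 1/(a+1) := by
          apply one_div_le_one_div_of_le (by positivity) (by exact_mod_cast add_le_add_left (Nat.cast_le.2 hab) 1)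
        linarith)) (fun n => measurableSet_Iic.nullMeasurableSet) ⟨0, hfin _⟩]
      refine le_iInf fun n => ?_
      have hnot : c + 1/(n+1) ∉ S := by
        rw [hSc]
        simp only [mem_Iic, not_le]
        have : (0:ℝ) < 1/(n+1) := by positivity
        linarith
      rcases lt_or_ge (ENNReal.ofReal t) (ν (Iic (c + 1/(n+1)))) with h | h
      · exact h.le
      · exact absurd ((hiff _).2 h) hnot
    have : ν S = ν (Iic c) := by rw [hSc]
    rw [this]
    exact le_antisymm ((hiff c).1 hcS) hge


lemma cdf_measurable (ν : Measure ℝ) [IsFiniteMeasure ν] :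
    Measurable (fun x => (ν (Iic x)).toReal) := by
  refine Monotone.measurable (fun a b hab => ?_)
  exact ENNReal.toReal_mono (measure_ne_top ν _) (measure_mono (Iic_subset_Iic.2 hab))

lemma map_cdf (ν : Measure ℝ) [IsFiniteMeasure ν] [NullSingletonClass ν] :
    Measure.map (fun x => (ν (Iic x)).toReal) ν
      = volume.restrict (Ico 0 (ν univ).toReal) := by
  have hmeas := cdf_measurable ν
  have hfinmap : IsFiniteMeasure (Measure.map (fun x => (ν (Iic x)).toReal) ν) := by
    constructor
    rw [Measure.map_apply hmeas MeasurableSet.univ]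
    exact lt_of_le_of_lt (measure_mono (subset_univ _)) (measure_lt_top ν univ)
  refine @Measure.ext_of_Iic ℝ _ _ _ _ _ _ _ _ hfinmap ?_
  intro a
  rw [Measure.map_apply hmeas measurableSet_Iic, Measure.restrict_apply measurableSet_Iic]
  have hpre : (fun x => (ν (Iic x)).toReal) ⁻¹' Iic a = {x | (ν (Iic x)).toReal ≤ a} := rfl
  rw [hpre]
  set m := (ν univ).toReal with hm
  have hνm : ν univ = ENNReal.ofReal m := (ENNReal.ofReal_toReal (measure_ne_top ν _)).symm
  rcases lt_or_ge a 0 with ha | ha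
  · have h1 : {x | (ν (Iic x)).toReal ≤ a} = ∅ := by
      ext x; simp only [mem_setOf_eq, mem_empty_iff_false, iff_false, not_le]
      exact lt_of_lt_of_le ha ENNReal.toReal_nonneg
    have h2 : Iic a ∩ Ico 0 m = ∅ := by
      ext x; simp only [mem_inter_iff, mem_Iic, mem_Ico, mem_empty_iff_false, iff_false]
      rintro ⟨h3, h4, -⟩; linarith
    rw [h1, h2]; simp
  · rcases lt_or_ge (ENNReal.ofReal a) (ν univ) with ham | ham
    · have ham' : a < m := by
        rw [hνm] at ham
        exact (ENNReal.ofReal_lt_ofReal_iff_of_nonneg ha).1 ham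
      rw [cdf_level ν ha ham]
      have h2 : Iic a ∩ Ico 0 m = Icc 0 a := by
        ext x
        simp only [mem_inter_iff, mem_Iic, mem_Ico, mem_Icc]
        constructor
        · rintro ⟨h3, h4, h5⟩; exact ⟨h4, h3⟩
        · rintro ⟨h3, h4⟩; exact ⟨h4, h3, lt_of_le_of_lt h4 ham'⟩
      rw [h2, Real.volume_Icc, sub_zero]
    · have hma : m ≤ a := by
        rw [hνm] at ham
        exact (ENNReal.ofReal_le_ofReal_iff ha).1 ham
      have h1 : {x | (ν (Iic x)).toReal ≤ a} = univ := by
        ext x; simp only [mem_setOf_eq, mem_univ, iff_true]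
        exact le_trans (ENNReal.toReal_mono (measure_ne_top ν _) (measure_mono (subset_univ _))) hma
      have h2 : Iic a ∩ Ico 0 m = Ico 0 m := by
        ext x
        simp only [mem_inter_iff, mem_Iic, mem_Ico]
        constructor
        · rintro ⟨h3, h4⟩; exact h4
        · rintro ⟨h3, h4⟩; exact ⟨le_trans h4.le hma, h3, h4⟩
      rw [h1, h2, Real.volume_Ico, sub_zero, hνm]


/-- Master lemma: a finite non-atomic measure on a standard Borel space admits an a.e.
injective measurable map pushing it to Lebesgue measure on `[0, total mass)`. -/
lemma master {Y : Type*} [MeasurableSpace Y] [StandardBorelSpace Y]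
    (ν : Measure Y) [IsFiniteMeasure ν] [NullSingletonClass ν] :
    ∃ φ : Y → ℝ, Measurable φ ∧
      Measure.map φ ν = volume.restrict (Ico 0 (ν univ).toReal) ∧
      ∃ G : Set Y, MeasurableSet G ∧ ν Gᶜ = 0 ∧ InjOn φ G := by
  set e := embeddingReal Y with he
  have hee : MeasurableEmbedding e := measurableEmbedding_embeddingReal Y
  set ν' := Measure.map e ν with hν'
  haveI : IsFiniteMeasure ν' := by
    constructor
    rw [hν', Measure.map_apply hee.measurable MeasurableSet.univ]
    exact lt_of_le_of_lt (measure_mono (subset_univ _)) (measure_lt_top ν univ)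
  haveI : NullSingletonClass ν' := by
    constructor
    intro y
    rw [hν', Measure.map_apply hee.measurable (MeasurableSet.singleton y)]
    rcases eq_empty_or_nonempty (e ⁻¹' {y}) with h | ⟨x, hx⟩
    · rw [h]; simp
    · have : e ⁻¹' {y} = {x} := by
        ext z
        simp only [mem_preimage, mem_singleton_iff] at *
        constructor
        · intro hz; exact hee.injective (hz.trans hx.symm)
        · intro hz; rw [hz]; exact hx
      rw [this]; exact measure_singleton x
  set F : ℝ → ℝ := fun x => (ν' (Iic x)).toReal with hF
  have hFm : Measurable F := cdf_measurable ν'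
  have hFmono : Monotone F := fun a b hab =>
    ENNReal.toReal_mono (measure_ne_top ν' _) (measure_mono (Iic_subset_Iic.2 hab))
  have hmap' : Measure.map F ν' = volume.restrict (Ico 0 (ν' univ).toReal) := map_cdf ν'
  have huniv : ν' univ = ν univ := by
    rw [hν', Measure.map_apply hee.measurable MeasurableSet.univ]; simp
  refine ⟨F ∘ e, hFm.comp hee.measurable, ?_, ?_⟩
  · rw [← Measure.map_map hFm hee.measurable, ← hν', hmap', huniv]
  · -- bad set : union of fibers over rationals
    set N : Set ℝ := ⋃ q : ℚ, F ⁻¹' {F q} with hN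
    have hNm : MeasurableSet N := MeasurableSet.iUnion fun q => hFm (MeasurableSet.singleton _)
    have hfiber : ∀ c : ℝ, ν' (F ⁻¹' {c}) = 0 := by
      intro c
      have : ν' (F ⁻¹' {c}) = Measure.map F ν' {c} := by
        rw [Measure.map_apply hFm (MeasurableSet.singleton c)]
      rw [this, hmap', Measure.restrict_apply (MeasurableSet.singleton c)]
      exact le_antisymm (le_trans (measure_mono (inter_subset_left)) (by simp)) (zero_le)
    have hNnull : ν' N = 0 := by
      refine le_antisymm (le_trans (measure_iUnion_le _) ?_) (zero_le)
      simp [hfiber]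
    refine ⟨e ⁻¹' Nᶜ, hee.measurable hNm.compl, ?_, ?_⟩
    · have : (e ⁻¹' Nᶜ)ᶜ = e ⁻¹' N := by
        rw [← preimage_compl, compl_compl]
      rw [this, ← Measure.map_apply hee.measurable hNm, ← hν']
      exact hNnull
    · intro x hx y hy hxy
      simp only [mem_preimage, mem_compl_iff] at hx hy
      by_contra hne
      -- wlog e x < e y
      have hexy : e x ≠ e y := fun h => hne (hee.injective h)
      have key : ∀ a b : ℝ, a < b → F a = F b → a ∈ N := by
        intro a b hab hFab
        rcases exists_rat_btwn hab with ⟨q, haq, hqb⟩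
        have h1 : F a ≤ F q := hFmono haq.le
        have h2 : F q ≤ F b := hFmono hqb.le
        have : F a = F q := le_antisymm h1 (hFab ▸ h2)
        exact mem_iUnion.2 ⟨q, by simp [this]⟩
      have hFeq : F (e x) = F (e y) := hxy
      rcases lt_trichotomy (e x) (e y) with h | h | h
      · exact hx (key _ _ h hFeq)
      · exact hexy h
      · exact hy (key _ _ h hFeq.symm)


lemma oneSide {X : Type*} [MeasurableSpace X] (μ : Measure X) [IsFiniteMeasure μ]
    (x₀ : X) {ι : Type*} (V : Finset ι)
    (B' A' : ι → Set X) (φ ψ : ι → X → ℝ) (m : ι → ℝ)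
    (hBm : ∀ v ∈ V, MeasurableSet (B' v))
    (hAm : ∀ v ∈ V, MeasurableSet (A' v))
    (hBd : (V : Set ι).Pairwise (fun v w => Disjoint (B' v) (B' w)))
    (hAd : (V : Set ι).Pairwise (fun v w => Disjoint (A' v) (A' w)))
    (hφ : ∀ v ∈ V, Measurable (φ v))
    (hinjA : ∀ v ∈ V, InjOn (ψ v) (A' v))
    (himg : ∀ v ∈ V, ψ v '' (A' v) = φ v '' (B' v))
    (hLS : ∀ v ∈ V, ∀ Z : Set X, MeasurableSet Z → MeasurableSet (ψ v '' (Z ∩ A' v)))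
    (hmapB : ∀ v ∈ V, ∀ E : Set ℝ, MeasurableSet E →
      μ (B' v ∩ φ v ⁻¹' E) = volume.restrict (Ico 0 (m v)) E)
    (hmapA : ∀ v ∈ V, ∀ E : Set ℝ, MeasurableSet E →
      μ (A' v ∩ ψ v ⁻¹' E) = volume.restrict (Ico 0 (m v)) E)
    (hBfull : μ (⋃ v ∈ V, B' v)ᶜ = 0)
    (hAfull : μ (⋃ v ∈ V, A' v)ᶜ = 0) :
    ∃ S : X → X, MeasurePreserving S μ μ ∧
      (∀ v ∈ V, ∀ x ∈ B' v, S x ∈ A' v ∧ ψ v (S x) = φ v x) ∧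
      ∀ x ∉ ⋃ v ∈ V, B' v, S x = x₀ := by
  classical
  haveI : Nonempty X := ⟨x₀⟩
  set D : Set X := ⋃ v ∈ V, B' v with hD
  set S : X → X := fun x =>
    if h : ∃ v, v ∈ V ∧ x ∈ B' v then
      invFunOn (ψ h.choose) (A' h.choose) (φ h.choose x) else x₀ with hSdef
  -- choice picks the right index
  have huniq : ∀ v ∈ V, ∀ x ∈ B' v, ∀ (h : ∃ w, w ∈ V ∧ x ∈ B' w), h.choose = v := by
    intro v hv x hx h
    rcases h.choose_spec with ⟨hw, hxw⟩
    by_contra hne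
    exact (Set.disjoint_left.1 (hBd hw hv hne)) hxw hx
  have pointSpec : ∀ v ∈ V, ∀ x ∈ B' v, S x ∈ A' v ∧ ψ v (S x) = φ v x := by
    intro v hv x hx
    have h : ∃ w, w ∈ V ∧ x ∈ B' w := ⟨v, hv, hx⟩
    have hch := huniq v hv x hx h
    have hmem : φ v x ∈ ψ v '' (A' v) := by
      rw [himg v hv]; exact mem_image_of_mem _ hx
    rcases hmem with ⟨a, haA, ha⟩
    have hex : ∃ a ∈ A' v, ψ v a = φ v x := ⟨a, haA, ha⟩
    have h1 : invFunOn (ψ v) (A' v) (φ v x) ∈ A' v := Function.invFunOn_mem hex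
    have h2 : ψ v (invFunOn (ψ v) (A' v) (φ v x)) = φ v x := Function.invFunOn_eq hex
    have hSx : S x = invFunOn (ψ v) (A' v) (φ v x) := by
      rw [hSdef]; simp only [h, dif_pos, hch]
    rw [hSx]
    exact ⟨h1, h2⟩
  have hoff : ∀ x ∉ D, S x = x₀ := by
    intro x hx
    rw [hSdef]
    have : ¬ ∃ v, v ∈ V ∧ x ∈ B' v := by
      intro ⟨v, hv, hxv⟩
      exact hx (mem_biUnion hv hxv)
    simp only [this, dif_neg, not_false_iff]
  -- preimage formula on each piece
  have hpre : ∀ v ∈ V, ∀ Z : Set X,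
      S ⁻¹' Z ∩ B' v = B' v ∩ φ v ⁻¹' (ψ v '' (Z ∩ A' v)) := by
    intro v hv Z
    ext x
    simp only [mem_inter_iff, mem_preimage]
    constructor
    · rintro ⟨hxZ, hxB⟩
      rcases pointSpec v hv x hxB with ⟨hSA, hSψ⟩
      exact ⟨hxB, ⟨S x, ⟨hxZ, hSA⟩, hSψ⟩⟩
    · rintro ⟨hxB, a, ⟨haZ, haA⟩, ha⟩
      rcases pointSpec v hv x hxB with ⟨hSA, hSψ⟩
      have : a = S x := hinjA v hv haA hSA (by rw [ha, hSψ])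
      exact ⟨this ▸ haZ, hxB⟩
  -- measurability
  have hDm : MeasurableSet D := Finset.measurableSet_biUnion V hBm
  have hSmeas : Measurable S := by
    intro Z hZ
    have hdecomp : S ⁻¹' Z =
        (⋃ v ∈ V, S ⁻¹' Z ∩ B' v) ∪ (S ⁻¹' Z ∩ Dᶜ) := by
      ext x
      simp only [mem_union, mem_iUnion, mem_inter_iff, mem_preimage, mem_compl_iff]
      constructor
      · intro hx
        by_cases hxD : x ∈ D
        · rcases mem_iUnion₂.1 hxD with ⟨v, hv, hxv⟩
          exact Or.inl ⟨v, hv, hx, hxv⟩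
        · exact Or.inr ⟨hx, hxD⟩
      · rintro (⟨v, hv, hx, _⟩ | ⟨hx, _⟩) <;> exact hx
    rw [hdecomp]
    refine MeasurableSet.union (MeasurableSet.biUnion V.countable_toSet fun v hv => ?_) ?_
    · rw [hpre v hv Z]
      exact ((hBm v hv).inter (hφ v hv (hLS v hv Z hZ)))
    · have heq : S ⁻¹' Z ∩ Dᶜ = if x₀ ∈ Z then Dᶜ else ∅ := by
        by_cases hx₀ : x₀ ∈ Z
        · rw [if_pos hx₀]
          ext x
          simp only [mem_inter_iff, mem_preimage, mem_compl_iff]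
          refine ⟨fun h => h.2, fun h => ⟨?_, h⟩⟩
          rw [hoff x h]; exact hx₀
        · rw [if_neg hx₀]
          ext x
          simp only [mem_inter_iff, mem_preimage, mem_compl_iff, mem_empty_iff_false, iff_false,
            not_and]
          intro hxZ hxD
          exact hx₀ (by rw [← hoff x hxD]; exact hxZ)
      rw [heq]
      by_cases hx₀ : x₀ ∈ Z
      · rw [if_pos hx₀]; exact hDm.compl
      · rw [if_neg hx₀]; exact MeasurableSet.empty
  have hMP : MeasurePreserving S μ μ := by
    refine ⟨hSmeas, Measure.ext fun Z hZ => ?_⟩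
    rw [Measure.map_apply hSmeas hZ]
    have h1 : μ (S ⁻¹' Z) = μ (S ⁻¹' Z ∩ D) := by
      refine le_antisymm ?_ (measure_mono inter_subset_left)
      calc μ (S ⁻¹' Z) ≤ μ ((S ⁻¹' Z ∩ D) ∪ Dᶜ) := by
            refine measure_mono fun x hx => ?_
            by_cases hxD : x ∈ D
            · exact Or.inl ⟨hx, hxD⟩
            · exact Or.inr hxD
        _ ≤ μ (S ⁻¹' Z ∩ D) + μ Dᶜ := measure_union_le _ _
        _ = μ (S ⁻¹' Z ∩ D) := by rw [hBfull, add_zero]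
    have h2 : S ⁻¹' Z ∩ D = ⋃ v ∈ V, (B' v ∩ φ v ⁻¹' (ψ v '' (Z ∩ A' v))) := by
      rw [hD, inter_iUnion₂]
      exact iUnion₂_congr fun v hv => hpre v hv Z
    have h3 : μ (S ⁻¹' Z ∩ D) = ∑ v ∈ V, μ (B' v ∩ φ v ⁻¹' (ψ v '' (Z ∩ A' v))) := by
      rw [h2]
      refine measure_biUnion_finset ?_ fun v hv => (hBm v hv).inter (hφ v hv (hLS v hv Z hZ))
      intro v hv w hw hvw
      exact Disjoint.mono inter_subset_left inter_subset_left (hBd hv hw hvw)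
    have h4 : ∀ v ∈ V, μ (B' v ∩ φ v ⁻¹' (ψ v '' (Z ∩ A' v))) = μ (Z ∩ A' v) := by
      intro v hv
      rw [hmapB v hv _ (hLS v hv Z hZ), ← hmapA v hv _ (hLS v hv Z hZ)]
      congr 1
      ext x
      simp only [mem_inter_iff, mem_preimage]
      constructor
      · rintro ⟨hxA, a, ⟨haZ, haA⟩, ha⟩
        have : a = x := hinjA v hv haA hxA ha
        exact ⟨this ▸ haZ, hxA⟩
      · rintro ⟨hxZ, hxA⟩
        exact ⟨hxA, x, ⟨hxZ, hxA⟩, rfl⟩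
    have h6 : μ (Z ∩ ⋃ v ∈ V, A' v) = ∑ v ∈ V, μ (Z ∩ A' v) := by
      rw [inter_iUnion₂]
      refine measure_biUnion_finset ?_ fun v hv => hZ.inter (hAm v hv)
      intro v hv w hw hvw
      exact Disjoint.mono inter_subset_right inter_subset_right (hAd hv hw hvw)
    have h7 : μ (Z ∩ ⋃ v ∈ V, A' v) = μ Z := by
      refine le_antisymm (measure_mono inter_subset_left) ?_
      calc μ Z ≤ μ ((Z ∩ ⋃ v ∈ V, A' v) ∪ (⋃ v ∈ V, A' v)ᶜ) := by
            refine measure_mono fun x hx => ?_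
            by_cases hxE : x ∈ ⋃ v ∈ V, A' v
            · exact Or.inl ⟨hx, hxE⟩
            · exact Or.inr hxE
        _ ≤ μ (Z ∩ ⋃ v ∈ V, A' v) + μ (⋃ v ∈ V, A' v)ᶜ := measure_union_le _ _
        _ = μ (Z ∩ ⋃ v ∈ V, A' v) := by rw [hAfull, add_zero]
    rw [h1, h3, Finset.sum_congr rfl h4, ← h6, h7]
  exact ⟨S, hMP, pointSpec, hoff⟩


lemma prep {X : Type*} [MeasurableSpace X] [StandardBorelSpace X]
    (μ : Measure X) [IsFiniteMeasure μ] [NullSingletonClass μ]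
    (Bv Av : Set X) (hBv : MeasurableSet Bv) (hAv : MeasurableSet Av) (hm : μ Bv = μ Av) :
    ∃ (B' A' : Set X) (φ ψ : X → ℝ),
      MeasurableSet B' ∧ MeasurableSet A' ∧ B' ⊆ Bv ∧ A' ⊆ Av ∧
      Measurable φ ∧ Measurable ψ ∧ InjOn φ B' ∧ InjOn ψ A' ∧
      ψ '' A' = φ '' B' ∧
      (∀ Z : Set X, MeasurableSet Z → MeasurableSet (ψ '' (Z ∩ A'))) ∧
      (∀ Z : Set X, MeasurableSet Z → MeasurableSet (φ '' (Z ∩ B'))) ∧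
      (∀ E : Set ℝ, MeasurableSet E →
        μ (B' ∩ φ ⁻¹' E) = volume.restrict (Ico 0 (μ Bv).toReal) E) ∧
      (∀ E : Set ℝ, MeasurableSet E →
        μ (A' ∩ ψ ⁻¹' E) = volume.restrict (Ico 0 (μ Bv).toReal) E) ∧
      μ (Bv \ B') = 0 ∧ μ (Av \ A') = 0 := by
  classical
  obtain ⟨φ, hφ, hmapφ, G, hGm, hGnull, hGinj⟩ := master (μ.restrict Bv)
  obtain ⟨ψ, hψ, hmapψ, H, hHm, hHnull, hHinj⟩ := master (μ.restrict Av)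
  rw [Measure.restrict_apply_univ] at hmapφ hmapψ
  rw [← hm] at hmapψ
  set lI := volume.restrict (Ico 0 (μ Bv).toReal) with hlI
  -- key transfer identities
  have keyB : ∀ E : Set ℝ, MeasurableSet E → μ (Bv ∩ φ ⁻¹' E) = lI E := by
    intro E hE
    rw [inter_comm, ← Measure.restrict_apply (hφ hE), ← Measure.map_apply hφ hE, hmapφ]
  have keyA : ∀ E : Set ℝ, MeasurableSet E → μ (Av ∩ ψ ⁻¹' E) = lI E := by
    intro E hE
    rw [inter_comm, ← Measure.restrict_apply (hψ hE), ← Measure.map_apply hψ hE, hmapψ]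
  -- good sets
  set Gb := Bv ∩ G with hGb
  set Ha := Av ∩ H with hHa
  have hGbm : MeasurableSet Gb := hBv.inter hGm
  have hHam : MeasurableSet Ha := hAv.inter hHm
  have hGbinj : InjOn φ Gb := hGinj.mono inter_subset_right
  have hHainj : InjOn ψ Ha := hHinj.mono inter_subset_right
  have hBGnull : μ (Bv \ Gb) = 0 := by
    have : Bv \ Gb = Gᶜ ∩ Bv := by
      ext x; simp only [hGb, mem_diff, mem_inter_iff, mem_compl_iff]; tauto
    rw [this, ← Measure.restrict_apply hGm.compl]
    exact hGnull
  have hAHnull : μ (Av \ Ha) = 0 := by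
    have : Av \ Ha = Hᶜ ∩ Av := by
      ext x; simp only [hHa, mem_diff, mem_inter_iff, mem_compl_iff]; tauto
    rw [this, ← Measure.restrict_apply hHm.compl]
    exact hHnull
  -- common image
  have himgGb : MeasurableSet (φ '' Gb) := hGbm.image_of_measurable_injOn hφ hGbinj
  have himgHa : MeasurableSet (ψ '' Ha) := hHam.image_of_measurable_injOn hψ hHainj
  set W := (φ '' Gb) ∩ (ψ '' Ha) with hW
  have hWm : MeasurableSet W := himgGb.inter himgHa
  set B' := Gb ∩ φ ⁻¹' W with hB'
  set A' := Ha ∩ ψ ⁻¹' W with hA'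
  have hB'm : MeasurableSet B' := hGbm.inter (hφ hWm)
  have hA'm : MeasurableSet A' := hHam.inter (hψ hWm)
  have hB'sub : B' ⊆ Bv := fun x hx => hx.1.1
  have hA'sub : A' ⊆ Av := fun x hx => hx.1.1
  have hB'inj : InjOn φ B' := hGbinj.mono inter_subset_left
  have hA'inj : InjOn ψ A' := hHainj.mono inter_subset_left
  -- null differences
  have hBnull : μ (Bv \ B') = 0 := by
    have hsub : Bv \ B' ⊆ (Bv \ Gb) ∪ (Bv ∩ φ ⁻¹' Wᶜ) := by
      intro x hx
      rcases hx with ⟨hxB, hxB'⟩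
      by_cases hxG : x ∈ Gb
      · refine Or.inr ⟨hxB, ?_⟩
        simp only [mem_preimage, mem_compl_iff]
        intro hxW
        exact hxB' ⟨hxG, hxW⟩
      · exact Or.inl ⟨hxB, hxG⟩
    refine le_antisymm (le_trans (measure_mono hsub) (le_trans (measure_union_le _ _) ?_)) (zero_le)
    rw [hBGnull, zero_add]
    rw [keyB _ hWm.compl]
    have hWc : lI Wᶜ ≤ lI (φ '' Gb)ᶜ + lI (ψ '' Ha)ᶜ := by
      rw [hW, compl_inter]
      exact measure_union_le _ _
    have h1 : lI (φ '' Gb)ᶜ = 0 := by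
      rw [← keyB _ himgGb.compl]
      refine le_antisymm (le_trans (measure_mono ?_) hBGnull.le) (zero_le)
      intro x hx
      rcases hx with ⟨hxB, hximg⟩
      simp only [mem_preimage, mem_compl_iff] at hximg
      exact ⟨hxB, fun hxG => hximg (mem_image_of_mem _ hxG)⟩
    have h2 : lI (ψ '' Ha)ᶜ = 0 := by
      rw [← keyA _ himgHa.compl]
      refine le_antisymm (le_trans (measure_mono ?_) hAHnull.le) (zero_le)
      intro x hx
      rcases hx with ⟨hxA, hximg⟩
      simp only [mem_preimage, mem_compl_iff] at hximg
      exact ⟨hxA, fun hxH => hximg (mem_image_of_mem _ hxH)⟩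
    calc lI Wᶜ ≤ lI (φ '' Gb)ᶜ + lI (ψ '' Ha)ᶜ := hWc
      _ = 0 := by rw [h1, h2, add_zero]
  have hAnull : μ (Av \ A') = 0 := by
    have hsub : Av \ A' ⊆ (Av \ Ha) ∪ (Av ∩ ψ ⁻¹' Wᶜ) := by
      intro x hx
      rcases hx with ⟨hxA, hxA'⟩
      by_cases hxH : x ∈ Ha
      · refine Or.inr ⟨hxA, ?_⟩
        simp only [mem_preimage, mem_compl_iff]
        intro hxW
        exact hxA' ⟨hxH, hxW⟩
      · exact Or.inl ⟨hxA, hxH⟩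
    refine le_antisymm (le_trans (measure_mono hsub) (le_trans (measure_union_le _ _) ?_)) (zero_le)
    rw [hAHnull, zero_add]
    rw [keyA _ hWm.compl]
    have h1 : lI (φ '' Gb)ᶜ = 0 := by
      rw [← keyB _ himgGb.compl]
      refine le_antisymm (le_trans (measure_mono ?_) hBGnull.le) (zero_le)
      intro x hx
      rcases hx with ⟨hxB, hximg⟩
      simp only [mem_preimage, mem_compl_iff] at hximg
      exact ⟨hxB, fun hxG => hximg (mem_image_of_mem _ hxG)⟩
    have h2 : lI (ψ '' Ha)ᶜ = 0 := by
      rw [← keyA _ himgHa.compl]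
      refine le_antisymm (le_trans (measure_mono ?_) hAHnull.le) (zero_le)
      intro x hx
      rcases hx with ⟨hxA, hximg⟩
      simp only [mem_preimage, mem_compl_iff] at hximg
      exact ⟨hxA, fun hxH => hximg (mem_image_of_mem _ hxH)⟩
    have hWc : lI Wᶜ ≤ lI (φ '' Gb)ᶜ + lI (ψ '' Ha)ᶜ := by
      rw [hW, compl_inter]
      exact measure_union_le _ _
    calc lI Wᶜ ≤ lI (φ '' Gb)ᶜ + lI (ψ '' Ha)ᶜ := hWc
      _ = 0 := by rw [h1, h2, add_zero]
  -- images equal W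
  have hφB' : φ '' B' = W := by
    apply Subset.antisymm
    · rintro w ⟨x, ⟨hxG, hxW⟩, rfl⟩
      exact hxW
    · rintro w hw
      rcases hw.1 with ⟨x, hxG, rfl⟩
      exact ⟨x, ⟨hxG, hw⟩, rfl⟩
  have hψA' : ψ '' A' = W := by
    apply Subset.antisymm
    · rintro w ⟨x, ⟨hxH, hxW⟩, rfl⟩
      exact hxW
    · rintro w hw
      rcases hw.2 with ⟨x, hxH, rfl⟩
      exact ⟨x, ⟨hxH, hw⟩, rfl⟩
  -- transfer identities on B', A'
  have hmapB' : ∀ E : Set ℝ, MeasurableSet E → μ (B' ∩ φ ⁻¹' E) = lI E := by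
    intro E hE
    refine le_antisymm (le_trans (measure_mono (inter_subset_inter_left _ hB'sub)) (keyB E hE).le) ?_
    rw [← keyB E hE]
    calc μ (Bv ∩ φ ⁻¹' E) ≤ μ (B' ∩ φ ⁻¹' E) + μ (Bv \ B') := by
          refine le_trans (measure_mono ?_) (measure_union_le _ _)
          intro x hx
          by_cases hxB' : x ∈ B'
          · exact Or.inl ⟨hxB', hx.2⟩
          · exact Or.inr ⟨hx.1, hxB'⟩
      _ = μ (B' ∩ φ ⁻¹' E) := by rw [hBnull, add_zero]
  have hmapA' : ∀ E : Set ℝ, MeasurableSet E → μ (A' ∩ ψ ⁻¹' E) = lI E := by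
    intro E hE
    refine le_antisymm (le_trans (measure_mono (inter_subset_inter_left _ hA'sub)) (keyA E hE).le) ?_
    rw [← keyA E hE]
    calc μ (Av ∩ ψ ⁻¹' E) ≤ μ (A' ∩ ψ ⁻¹' E) + μ (Av \ A') := by
          refine le_trans (measure_mono ?_) (measure_union_le _ _)
          intro x hx
          by_cases hxA' : x ∈ A'
          · exact Or.inl ⟨hxA', hx.2⟩
          · exact Or.inr ⟨hx.1, hxA'⟩
      _ = μ (A' ∩ ψ ⁻¹' E) := by rw [hAnull, add_zero]
  refine ⟨B', A', φ, ψ, hB'm, hA'm, hB'sub, hA'sub, hφ, hψ, hB'inj, hA'inj,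
    hψA'.trans hφB'.symm, ?_, ?_, hmapB', hmapA', hBnull, hAnull⟩
  · intro Z hZ
    exact (hZ.inter hA'm).image_of_measurable_injOn hψ (hA'inj.mono inter_subset_right)
  · intro Z hZ
    exact (hZ.inter hB'm).image_of_measurable_injOn hφ (hB'inj.mono inter_subset_right)


lemma exists_invertible_matching {X : Type*} [MeasurableSpace X] [StandardBorelSpace X]
    (μ : Measure X) [IsProbabilityMeasure μ] [NullSingletonClass μ]
    {ι : Type*} (V : Finset ι) (A B : ι → Set X)
    (hAm : ∀ v ∈ V, MeasurableSet (A v)) (hBm : ∀ v ∈ V, MeasurableSet (B v))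
    (hAd : (V : Set ι).Pairwise (fun v w => Disjoint (A v) (A w)))
    (hBd : (V : Set ι).Pairwise (fun v w => Disjoint (B v) (B w)))
    (hAU : univ ⊆ ⋃ v ∈ V, A v) (hBU : univ ⊆ ⋃ v ∈ V, B v)
    (hmeq : ∀ v ∈ V, μ (B v) = μ (A v)) :
    ∃ S R : X → X, MeasurePreserving S μ μ ∧ MeasurePreserving R μ μ ∧
      (∀ᵐ x ∂μ, R (S x) = x) ∧ (∀ᵐ x ∂μ, S (R x) = x) ∧
      (∀ᵐ x ∂μ, ∀ v ∈ V, x ∈ B v → S x ∈ A v) := by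
  classical
  have hXne : Nonempty X := by
    rcases isEmpty_or_nonempty X with h | h
    · exfalso
      have h1 : μ univ = 1 := measure_univ
      rw [Set.univ_eq_empty_iff.2 h, measure_empty] at h1
      exact zero_ne_one h1
    · exact h
  obtain ⟨x₀⟩ := hXne
  -- choose data for each v
  have hchoice : ∀ v : ι, ∃ (B' A' : Set X) (φ ψ : X → ℝ),
      v ∈ V → (MeasurableSet B' ∧ MeasurableSet A' ∧ B' ⊆ B v ∧ A' ⊆ A v ∧
      Measurable φ ∧ Measurable ψ ∧ InjOn φ B' ∧ InjOn ψ A' ∧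
      ψ '' A' = φ '' B' ∧
      (∀ Z : Set X, MeasurableSet Z → MeasurableSet (ψ '' (Z ∩ A'))) ∧
      (∀ Z : Set X, MeasurableSet Z → MeasurableSet (φ '' (Z ∩ B'))) ∧
      (∀ E : Set ℝ, MeasurableSet E →
        μ (B' ∩ φ ⁻¹' E) = volume.restrict (Ico 0 (μ (B v)).toReal) E) ∧
      (∀ E : Set ℝ, MeasurableSet E →
        μ (A' ∩ ψ ⁻¹' E) = volume.restrict (Ico 0 (μ (B v)).toReal) E) ∧
      μ (B v \ B') = 0 ∧ μ (A v \ A') = 0) := by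
    intro v
    by_cases hv : v ∈ V
    · obtain ⟨B', A', φ, ψ, h⟩ :=
        prep μ (B v) (A v) (hBm v hv) (hAm v hv) (hmeq v hv)
      exact ⟨B', A', φ, ψ, fun _ => h⟩
    · exact ⟨∅, ∅, 0, 0, fun h => absurd h hv⟩
  choose B' A' φ ψ hdata using hchoice
  have hB'm : ∀ v ∈ V, MeasurableSet (B' v) := fun v hv => (hdata v hv).1
  have hA'm : ∀ v ∈ V, MeasurableSet (A' v) := fun v hv => (hdata v hv).2.1
  have hB'sub : ∀ v ∈ V, B' v ⊆ B v := fun v hv => (hdata v hv).2.2.1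
  have hA'sub : ∀ v ∈ V, A' v ⊆ A v := fun v hv => (hdata v hv).2.2.2.1
  have hφ : ∀ v ∈ V, Measurable (φ v) := fun v hv => (hdata v hv).2.2.2.2.1
  have hψ : ∀ v ∈ V, Measurable (ψ v) := fun v hv => (hdata v hv).2.2.2.2.2.1
  have hB'inj : ∀ v ∈ V, InjOn (φ v) (B' v) := fun v hv => (hdata v hv).2.2.2.2.2.2.1
  have hA'inj : ∀ v ∈ V, InjOn (ψ v) (A' v) := fun v hv => (hdata v hv).2.2.2.2.2.2.2.1
  have himg : ∀ v ∈ V, ψ v '' (A' v) = φ v '' (B' v) :=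
    fun v hv => (hdata v hv).2.2.2.2.2.2.2.2.1
  have hLSA : ∀ v ∈ V, ∀ Z : Set X, MeasurableSet Z → MeasurableSet (ψ v '' (Z ∩ A' v)) :=
    fun v hv => (hdata v hv).2.2.2.2.2.2.2.2.2.1
  have hLSB : ∀ v ∈ V, ∀ Z : Set X, MeasurableSet Z → MeasurableSet (φ v '' (Z ∩ B' v)) :=
    fun v hv => (hdata v hv).2.2.2.2.2.2.2.2.2.2.1
  have hmapB : ∀ v ∈ V, ∀ E : Set ℝ, MeasurableSet E →
      μ (B' v ∩ φ v ⁻¹' E) = volume.restrict (Ico 0 (μ (B v)).toReal) E :=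
    fun v hv => (hdata v hv).2.2.2.2.2.2.2.2.2.2.2.1
  have hmapA : ∀ v ∈ V, ∀ E : Set ℝ, MeasurableSet E →
      μ (A' v ∩ ψ v ⁻¹' E) = volume.restrict (Ico 0 (μ (B v)).toReal) E :=
    fun v hv => (hdata v hv).2.2.2.2.2.2.2.2.2.2.2.2.1
  have hBnull : ∀ v ∈ V, μ (B v \ B' v) = 0 :=
    fun v hv => (hdata v hv).2.2.2.2.2.2.2.2.2.2.2.2.2.1
  have hAnull : ∀ v ∈ V, μ (A v \ A' v) = 0 :=
    fun v hv => (hdata v hv).2.2.2.2.2.2.2.2.2.2.2.2.2.2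
  have hB'd : (V : Set ι).Pairwise (fun v w => Disjoint (B' v) (B' w)) :=
    fun v hv w hw hvw => (hBd hv hw hvw).mono (hB'sub v hv) (hB'sub w hw)
  have hA'd : (V : Set ι).Pairwise (fun v w => Disjoint (A' v) (A' w)) :=
    fun v hv w hw hvw => (hAd hv hw hvw).mono (hA'sub v hv) (hA'sub w hw)
  have hBfull : μ (⋃ v ∈ V, B' v)ᶜ = 0 := by
    have hsub : (⋃ v ∈ V, B' v)ᶜ ⊆ ⋃ v ∈ V, (B v \ B' v) := by
      intro x hx
      simp only [mem_compl_iff, mem_iUnion, not_exists] at hx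
      rcases mem_iUnion₂.1 (hBU (mem_univ x)) with ⟨v, hv, hxv⟩
      exact mem_biUnion hv ⟨hxv, fun h => hx v hv h⟩
    refine le_antisymm (le_trans (measure_mono hsub) ?_) (zero_le)
    refine le_trans (measure_biUnion_finset_le V _) ?_
    rw [Finset.sum_congr rfl hBnull, Finset.sum_const, smul_zero]
  have hAfull : μ (⋃ v ∈ V, A' v)ᶜ = 0 := by
    have hsub : (⋃ v ∈ V, A' v)ᶜ ⊆ ⋃ v ∈ V, (A v \ A' v) := by
      intro x hx
      simp only [mem_compl_iff, mem_iUnion, not_exists] at hx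
      rcases mem_iUnion₂.1 (hAU (mem_univ x)) with ⟨v, hv, hxv⟩
      exact mem_biUnion hv ⟨hxv, fun h => hx v hv h⟩
    refine le_antisymm (le_trans (measure_mono hsub) ?_) (zero_le)
    refine le_trans (measure_biUnion_finset_le V _) ?_
    rw [Finset.sum_congr rfl hAnull, Finset.sum_const, smul_zero]
  obtain ⟨S, hSmp, hSspec, hSoff⟩ :=
    oneSide μ x₀ V B' A' φ ψ (fun v => (μ (B v)).toReal) hB'm hA'm hB'd hA'd hφ hA'inj himg
      hLSA hmapB hmapA hBfull hAfull
  obtain ⟨R, hRmp, hRspec, hRoff⟩ :=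
    oneSide μ x₀ V A' B' ψ φ (fun v => (μ (B v)).toReal) hA'm hB'm hA'd hB'd hψ hB'inj
      (fun v hv => (himg v hv).symm) hLSB hmapA hmapB hAfull hBfull
  have haeB : ∀ᵐ x ∂μ, x ∈ ⋃ v ∈ V, B' v := by
    refine measure_mono_null (fun x hx => hx) hBfull
  have haeA : ∀ᵐ x ∂μ, x ∈ ⋃ v ∈ V, A' v := by
    refine measure_mono_null (fun x hx => hx) hAfull
  refine ⟨S, R, hSmp, hRmp, ?_, ?_, ?_⟩
  · refine haeB.mono fun x hx => ?_
    rcases mem_iUnion₂.1 hx with ⟨v, hv, hxv⟩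
    obtain ⟨hSA, hSψ⟩ := hSspec v hv x hxv
    obtain ⟨hRB, hRφ⟩ := hRspec v hv (S x) hSA
    exact hB'inj v hv hRB hxv (by rw [hRφ, hSψ])
  · refine haeA.mono fun x hx => ?_
    rcases mem_iUnion₂.1 hx with ⟨v, hv, hxv⟩
    obtain ⟨hRB, hRφ⟩ := hRspec v hv x hxv
    obtain ⟨hSA, hSψ⟩ := hSspec v hv (R x) hRB
    exact hA'inj v hv hSA hxv (by rw [hSψ, hRφ])
  · refine haeB.mono fun x hx => ?_
    rcases mem_iUnion₂.1 hx with ⟨w, hw, hxw⟩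
    intro v hv hxv
    have hvw : v = w := by
      by_contra hne
      exact (Set.disjoint_left.1 (hBd hv hw hne)) hxv (hB'sub w hw hxw)
    subst hvw
    exact hA'sub v hv (hSspec v hv x hxw).1

end InvDense

end AuxiliaryInvDense

open Set Function
open scoped ENNReal

/-- On a standard non-atomic probability space, the invertible measure-preserving
transformations are dense (for the strong operator topology on Koopman operators) in the
set of all measure-preserving transformations. -/

theorem invertible_dense_in_mpt {X : Type*} [MeasurableSpace X] [StandardBorelSpace X]
    (μ : Measure X) [IsProbabilityMeasure μ] [NullSingletonClass μ] :
    Dense {g : (Koop X μ) | (g : Lp ℝ 2 μ → Lp ℝ 2 μ) ∈ KoopInv X μ} := by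
  classical
  haveI : Fact ((1:ℝ≥0∞) ≤ 2) := ⟨one_le_two⟩
  rintro ⟨g, hg⟩
  obtain ⟨T, hT, hgT⟩ := hg
  rw [mem_closure_iff_nhds]
  intro t ht
  erw [nhds_subtype_eq_comap] at ht
  obtain ⟨U, hU, hUsub⟩ := Filter.mem_comap.1 ht
  rw [nhds_pi] at hU
  obtain ⟨I, hIfin, t', ht', hIsub⟩ := Filter.mem_pi.1 hU
  -- ε-balls inside the neighborhoods
  have hball : ∀ f : Lp ℝ 2 μ, ∃ ε : ℝ, 0 < ε ∧ Metric.ball (g f) ε ⊆ t' f := by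
    intro f
    obtain ⟨ε, hε, hsub⟩ := Metric.mem_nhds_iff.1 (ht' f)
    exact ⟨ε, hε, hsub⟩
  choose ε hε hεsub using hball
  -- simple function approximations
  have happrox : ∀ f : Lp ℝ 2 μ, ∃ σ : Lp ℝ 2 μ,
      σ ∈ Lp.simpleFunc ℝ 2 μ ∧ dist f σ < ε f / 2 := by
    intro f
    have hd := Lp.simpleFunc.dense (E := ℝ) (p := 2) (μ := μ) (by norm_num)
    have := Metric.mem_closure_iff.1 (hd f) (ε f / 2) (by linarith [hε f])
    obtain ⟨b, hb, hdist⟩ := this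
    exact ⟨b, hb, hdist⟩
  choose σ hσmem hσdist using happrox
  set s : Lp ℝ 2 μ → SimpleFunc X ℝ := fun f => Lp.simpleFunc.toSimpleFunc ⟨σ f, hσmem f⟩ with hs
  have hs_ae : ∀ f, (s f : X → ℝ) =ᵐ[μ] (σ f : X → ℝ) := by
    intro f
    exact Lp.simpleFunc.toSimpleFunc_eq_toFun ⟨σ f, hσmem f⟩
  set J : Finset (Lp ℝ 2 μ) := hIfin.toFinset with hJ
  -- the combined pattern map
  set P : X → (Lp ℝ 2 μ → ℝ) := fun x f => if f ∈ I then s f x else 0 with hP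
  have hPfin : (Set.range P).Finite := by
    have hQfin : (Set.range (fun x => fun j : J => s (j : Lp ℝ 2 μ) x)).Finite := by
      refine Set.Finite.subset (Set.Finite.pi (fun j : J => (s (j : Lp ℝ 2 μ)).finite_range))
        ?_
      rintro w ⟨x, rfl⟩
      intro j _
      exact ⟨x, rfl⟩
    have : Set.range P ⊆ (fun w : (J → ℝ) => fun f =>
        if h : f ∈ I then w ⟨f, hIfin.mem_toFinset.2 h⟩ else 0) '' (Set.range (fun x => fun j : J => s (j : Lp ℝ 2 μ) x)) := by
      rintro w ⟨x, rfl⟩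
      refine ⟨fun j => s (j : Lp ℝ 2 μ) x, ⟨x, rfl⟩, ?_⟩
      funext f
      simp only [hP]
      by_cases h : f ∈ I
      · rw [if_pos h, dif_pos h]
      · rw [if_neg h, dif_neg h]
    exact Set.Finite.subset (hQfin.image _) this
  set V : Finset (Lp ℝ 2 μ → ℝ) := hPfin.toFinset with hV
  set A : (Lp ℝ 2 μ → ℝ) → Set X := fun w => P ⁻¹' {w} with hA
  set B : (Lp ℝ 2 μ → ℝ) → Set X := fun w => T ⁻¹' (A w) with hB
  -- fibers are measurable
  have hArep : ∀ w ∈ V, A w = ⋂ f ∈ J, (s f) ⁻¹' {w f} := by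
    intro w hw
    obtain ⟨y, rfl⟩ := hPfin.mem_toFinset.1 hw
    ext x
    simp only [hA, mem_preimage, mem_singleton_iff, mem_iInter]
    constructor
    · intro hx f hf
      have hfI : f ∈ I := hIfin.mem_toFinset.1 hf
      have h2 := congrFun hx f
      simp only [hP, if_pos hfI] at h2
      simp only [mem_preimage, mem_singleton_iff, hP, if_pos hfI]
      exact h2
    · intro hx
      funext f
      by_cases hfI : f ∈ I
      · have h2 := hx f (hIfin.mem_toFinset.2 hfI)
        simp only [mem_preimage, mem_singleton_iff, hP, if_pos hfI] at h2
        simp only [hP, if_pos hfI]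
        exact h2
      · simp only [hP, if_neg hfI]
  have hAmeas : ∀ w ∈ V, MeasurableSet (A w) := by
    intro w hw
    rw [hArep w hw]
    exact Finset.measurableSet_biInter J fun f _ =>
      (s f).measurable (MeasurableSet.singleton _)
  have hBmeas : ∀ w ∈ V, MeasurableSet (B w) := fun w hw => hT.measurable (hAmeas w hw)
  have hAdisj : ((V : Set (Lp ℝ 2 μ → ℝ))).Pairwise (fun v w => Disjoint (A v) (A w)) := by
    intro v _ w _ hvw
    rw [Set.disjoint_left]
    rintro x hxv hxw
    exact hvw (hxv.symm.trans hxw)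
  have hBdisj : ((V : Set (Lp ℝ 2 μ → ℝ))).Pairwise (fun v w => Disjoint (B v) (B w)) := by
    intro v hv w hw hvw
    exact Disjoint.preimage T (hAdisj hv hw hvw)
  have hAU : univ ⊆ ⋃ w ∈ V, A w := by
    intro x _
    exact mem_biUnion (hPfin.mem_toFinset.2 ⟨x, rfl⟩) rfl
  have hBU : univ ⊆ ⋃ w ∈ V, B w := by
    intro x _
    exact mem_biUnion (hPfin.mem_toFinset.2 ⟨T x, rfl⟩) rfl
  have hmeq : ∀ w ∈ V, μ (B w) = μ (A w) := fun w hw =>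
    hT.measure_preimage (hAmeas w hw).nullMeasurableSet
  obtain ⟨S, R, hS, hR, hRS, hSR, hmatch⟩ :=
    InvDense.exists_invertible_matching μ V A B hAmeas hBmeas hAdisj hBdisj hAU hBU hmeq
  -- the Koopman operator of S
  set KS := Lp.compMeasurePreserving (E := ℝ) (p := 2) S hS with hKS
  set KT := Lp.compMeasurePreserving (E := ℝ) (p := 2) T hT with hKT
  set h : Lp ℝ 2 μ → Lp ℝ 2 μ := fun f => KS f with hh
  have hKoop : h ∈ Koop X μ :=
    ⟨S, hS, fun f => Lp.coeFn_compMeasurePreserving f hS⟩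
  have hKoopInv : h ∈ KoopInv X μ :=
    ⟨S, R, hS, hR, hRS, hSR, fun f => Lp.coeFn_compMeasurePreserving f hS⟩
  -- key: s f ∘ S = s f ∘ T a.e. for f ∈ I
  have hcomp : ∀ f ∈ I, ((s f : X → ℝ) ∘ S) =ᵐ[μ] ((s f : X → ℝ) ∘ T) := by
    intro f hf
    refine hmatch.mono fun x hx => ?_
    have hw : P (T x) ∈ V := hPfin.mem_toFinset.2 ⟨T x, rfl⟩
    have hxB : x ∈ B (P (T x)) := by
      simp only [hB, hA, mem_preimage, mem_singleton_iff]
    have hSx : S x ∈ A (P (T x)) := hx (P (T x)) hw hxB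
    have : P (S x) = P (T x) := hSx
    have := congrFun this f
    simp only [hP, if_pos hf] at this
    exact this
  -- the estimate
  have hgf : ∀ f : Lp ℝ 2 μ, g f = KT f := by
    intro f
    refine Lp.ext ((hgT f).trans ?_)
    exact (Lp.coeFn_compMeasurePreserving f hT).symm
  have hmid : ∀ f ∈ I, KS (σ f) = KT (σ f) := by
    intro f hf
    refine Lp.ext ?_
    calc (KS (σ f) : X → ℝ) =ᵐ[μ] (σ f : X → ℝ) ∘ S := Lp.coeFn_compMeasurePreserving (σ f) hS
      _ =ᵐ[μ] (s f : X → ℝ) ∘ S := by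
          refine ae_eq_comp hS.aemeasurable ?_
          rw [hS.map_eq]
          exact (hs_ae f).symm
      _ =ᵐ[μ] (s f : X → ℝ) ∘ T := hcomp f hf
      _ =ᵐ[μ] (σ f : X → ℝ) ∘ T := by
          refine ae_eq_comp hT.aemeasurable ?_
          rw [hT.map_eq]
          exact hs_ae f
      _ =ᵐ[μ] (KT (σ f) : X → ℝ) := (Lp.coeFn_compMeasurePreserving (σ f) hT).symm
  have hdist : ∀ f ∈ I, dist (h f) (g f) < ε f := by
    intro f hf
    rw [hgf f]
    calc dist (KS f) (KT f)
        ≤ dist (KS f) (KS (σ f)) + dist (KS (σ f)) (KT (σ f)) + dist (KT (σ f)) (KT f) :=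
          dist_triangle4 _ _ _ _
      _ = dist f (σ f) + 0 + dist (σ f) f := by
          rw [(Lp.isometry_compMeasurePreserving hS).dist_eq,
            (Lp.isometry_compMeasurePreserving hT).dist_eq, hmid f hf, dist_self]
      _ < ε f / 2 + 0 + ε f / 2 := by
          have h1 := hσdist f
          have h2 : dist (σ f) f = dist f (σ f) := dist_comm _ _
          rw [h2]
          linarith
      _ = ε f := by ring
  -- conclude
  refine ⟨⟨h, hKoop⟩, ?_, hKoopInv⟩
  apply hUsub
  show h ∈ U
  apply hIsub
  intro f hf
  exact hεsub f (by
    rw [Metric.mem_ball]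
    exact hdist f hf)
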